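/- Let π ∈ S_{n+1} be an involution containing the transposition (i, n+1) in canonic form, with remaining transpositions (i₁,j₁),…,(i_k,j_k). Then 𝔍(π) = 𝔍(π_n) + #{t : i_t < i < j_t} + 2·#{t : i_t > i}, where π_n is the restriction fixing i and n+1 removed. -/

import Mathlib

open Matrix

/-- `M` is a monomial anti-symmetric matrix with nonzero entries `±1`,
the `+1`'s above the main diagonal and the `-1`'s below it. -/
def GoodMat {n : ℕ} (M : Matrix (Fin n) (Fin n) ℂ) : Prop :=
  Mᵀ = -M ∧
  (∀ i j k : Fin n, M i j ≠ 0 → M i k ≠ 0 → j = k) ∧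
  (∀ i j k : Fin n, M j i ≠ 0 → M k i ≠ 0 → j = k) ∧
  (∀ i j : Fin n, M i j = 0 ∨ (i < j ∧ M i j = 1) ∨ (j < i ∧ M i j = -1))

/-- The monomial anti-symmetric `±1`-matrix associated to an involution. -/
def invMat {n : ℕ} (π : Equiv.Perm (Fin n)) : Matrix (Fin n) (Fin n) ℂ :=
  fun i j => if i < j ∧ π i = j then 1 else if j < i ∧ π j = i then -1 else 0

/-- Rank-control function: rank of the upper-left `k × l` submatrix
(with natural-number indices, clipped at `n`; in particular `rc A 0 l = 0`). -/
noncomputable def rc {n : ℕ} (A : Matrix (Fin n) (Fin n) ℂ) (k l : ℕ) : ℕ :=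
  (A.submatrix (fun x : Fin (min k n) => Fin.castLE (min_le_right k n) x)
    (fun y : Fin (min l n) => Fin.castLE (min_le_right l n) y)).rank

/-- The parameter `𝔄`: the number of equalities along the diagonals of the
strict upper triangle of the rank-control matrix, with `r₀ₖ := 0`. -/
noncomputable def AA {n : ℕ} (A : Matrix (Fin n) (Fin n) ℂ) : ℕ :=
  (Finset.univ.filter (fun p : Fin n × Fin n =>
    (p.1 : ℕ) < (p.2 : ℕ) ∧
      rc A ((p.1 : ℕ) + 1) ((p.2 : ℕ) + 1) = rc A (p.1 : ℕ) (p.2 : ℕ))).card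

/-- Number of inversions of a word. -/
def inversions (w : List ℕ) : ℕ :=
  ((Finset.range w.length ×ˢ Finset.range w.length).filter
    (fun p => p.1 < p.2 ∧ w.getD p.2 0 < w.getD p.1 0)).card

/-- `l` is the canonic form of the involution `π`: the list of the disjoint
transpositions `(iₜ, jₜ)` of `π` with `iₜ < jₜ`, sorted by first entries. -/
def IsCanonic {n : ℕ} (π : Equiv.Perm (Fin n)) (l : List (Fin n × Fin n)) : Prop :=
  (∀ p ∈ l, p.1 < p.2 ∧ π p.1 = p.2) ∧
  (∀ a : Fin n, a < π a → (a, π a) ∈ l) ∧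
  l.Pairwise (fun p q => p.1 < q.1)

/-- The word `i₁ j₁ i₂ j₂ ⋯ iₖ jₖ` (with 1-indexed letters) of a canonic form. -/
def wordOf {n : ℕ} (l : List (Fin n × Fin n)) : List ℕ :=
  l.flatMap fun p => [(p.1 : ℕ) + 1, (p.2 : ℕ) + 1]

namespace Aux14

/-- inversions computed recursively. -/
def inv2 : List ℕ → ℕ
  | [] => 0
  | x :: xs => xs.countP (fun a => decide (a < x)) + inv2 xs

lemma countP_eq_sum (p : ℕ → Bool) (w : List ℕ) :
    (w.countP p : ℕ) = ∑ j ∈ Finset.range w.length, if p (w.getD j 0) then 1 else 0 := by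
  induction w with
  | nil => simp
  | cons x xs ih =>
    rw [List.length_cons, Finset.sum_range_succ', List.countP_cons]
    simp only [List.getD_cons_succ, List.getD_cons_zero, ← ih]

lemma inversions_eq_sum (w : List ℕ) :
    inversions w = ∑ a ∈ Finset.range w.length, ∑ b ∈ Finset.range w.length,
      if (a < b ∧ w.getD b 0 < w.getD a 0) then 1 else 0 := by
  rw [inversions, Finset.card_filter, Finset.sum_product]

lemma inversions_eq_inv2 (w : List ℕ) : inversions w = inv2 w := by
  induction w with
  | nil => simp [inversions_eq_sum, inv2]
  | cons x xs ih =>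
    rw [inversions_eq_sum, List.length_cons, Finset.sum_range_succ']
    have h1 : ∀ a ∈ Finset.range xs.length,
        (∑ b ∈ Finset.range (xs.length + 1),
          if (a + 1 < b ∧ (x :: xs).getD b 0 < (x :: xs).getD (a+1) 0) then 1 else 0)
        = ∑ b ∈ Finset.range xs.length,
          if (a < b ∧ xs.getD b 0 < xs.getD a 0) then 1 else 0 := by
      intro a _
      rw [Finset.sum_range_succ']
      simp only [List.getD_cons_succ, List.getD_cons_zero]
      simp
    rw [Finset.sum_congr rfl h1, Finset.sum_range_succ']
    simp only [List.getD_cons_succ, List.getD_cons_zero]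
    rw [← inversions_eq_sum, ih, inv2, countP_eq_sum]
    simp
    omega

lemma inv2_append (a b : List ℕ) :
    inv2 (a ++ b) = inv2 a + inv2 b
      + (a.map fun x => b.countP (fun z => decide (z < x))).sum := by
  induction a with
  | nil => simp [inv2]
  | cons x xs ih => simp [inv2, List.countP_append, ih]; omega

lemma sum_map_add {α : Type*} (l : List α) (f g : α → ℕ) :
    (l.map fun a => f a + g a).sum = (l.map f).sum + (l.map g).sum := by
  induction l with
  | nil => simp
  | cons x xs ih => simp [ih]; omega

lemma wordOf_length {n : ℕ} (l : List (Fin n × Fin n)) :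
    (wordOf l).length = 2 * l.length := by
  induction l with
  | nil => simp [wordOf]
  | cons p tl ih => simp [wordOf, List.flatMap_cons] at *; omega

lemma count_lemma {n : ℕ} (i : Fin (n+1)) (l₁ : List (Fin (n+1) × Fin (n+1)))
    (h : ∀ p ∈ l₁, p.1 < i) :
    ((wordOf l₁).map fun a => if (i:ℕ)+1 < a then 1 else 0).sum
      = (l₁.filter fun p => decide (p.1 < i ∧ i < p.2)).length := by
  induction l₁ with
  | nil => simp [wordOf]
  | cons p tl ih =>
    have hp := h p List.mem_cons_self
    have hni : ¬ ((i:ℕ)+1 < (p.1:ℕ)+1) := by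
      have := (Fin.lt_def).mp hp; omega
    rw [List.filter_cons]
    have hword : wordOf (p :: tl) = ((p.1:ℕ)+1) :: ((p.2:ℕ)+1) :: wordOf tl := by
      simp [wordOf, List.flatMap_cons]
    rw [hword]
    by_cases h2 : i < p.2
    · have : (i:ℕ)+1 < (p.2:ℕ)+1 := by have := (Fin.lt_def).mp h2; omega
      simp [hni, this, hp, h2, ih (fun q hq => h q (List.mem_cons_of_mem p hq))]
      omega
    · have : ¬ ((i:ℕ)+1 < (p.2:ℕ)+1) := by
        have := (Fin.lt_def (a := i) (b := p.2)); omega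
      simp [hni, this, h2, ih (fun q hq => h q (List.mem_cons_of_mem p hq))]

end Aux14

open Aux14

/-- If the canonic form `l` of the involution `π ∈ S_{n+1}` contains the
transposition `(i, n+1)`, and the remaining transpositions `(iₜ,jₜ)` form the
canonic form of the restriction `πₙ`, then
`𝔍(π) = 𝔍(πₙ) + #{t : iₜ < i < jₜ} + 2·#{t : iₜ > i}`. -/


theorem stmt14 (n : ℕ) (π : Equiv.Perm (Fin (n + 1))) (hπ : π * π = 1)
    (l : List (Fin (n + 1) × Fin (n + 1))) (hl : IsCanonic π l)
    (i : Fin (n + 1)) (hmem : (i, Fin.last n) ∈ l) :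
    inversions (wordOf l) =
      inversions (wordOf (l.erase (i, Fin.last n))) +
        ((l.erase (i, Fin.last n)).filter fun p => decide (p.1 < i ∧ i < p.2)).length +
        2 * ((l.erase (i, Fin.last n)).filter fun p => decide (i < p.1)).length := by
  unfold IsCanonic at hl
  obtain ⟨l₁, l₂, rfl⟩ := List.append_of_mem hmem
  obtain ⟨hcan, -, hpw⟩ := hl
  rw [List.pairwise_append] at hpw
  obtain ⟨-, hpw2, hcross⟩ := hpw
  have h1 : ∀ p ∈ l₁, p.1 < i := fun p hp =>
    hcross p hp (i, Fin.last n) List.mem_cons_self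
  have h2 : ∀ p ∈ l₂, i < p.1 := fun p hp => (List.pairwise_cons.mp hpw2).1 p hp
  have hπi : π i = Fin.last n := (hcan _ hmem).2
  have hcan2 : ∀ p ∈ l₂, p.1 < p.2 ∧ π p.1 = p.2 := fun p hp => hcan p (by simp [hp])
  have h3 : ∀ p ∈ l₂, (p.2 : ℕ) < n := by
    intro p hp
    have hc := hcan2 p hp
    have hne : p.2 ≠ Fin.last n := by
      intro h
      have heq : π p.1 = π i := by rw [hπi, hc.2, h]
      have := π.injective heq
      exact absurd (h2 p hp) (by rw [this]; exact lt_irrefl i)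
    have hle := p.2.is_le
    have : (p.2 : ℕ) ≠ n := fun h => hne (Fin.ext (by simp [h, Fin.val_last]))
    omega
  have hnot : (i, Fin.last n) ∉ l₁ := fun h => lt_irrefl i (h1 _ h)
  have herase : (l₁ ++ (i, Fin.last n) :: l₂).erase (i, Fin.last n) = l₁ ++ l₂ := by
    rw [List.erase_append_right _ hnot, List.erase_cons_head]
  rw [herase]
  have hword : wordOf (l₁ ++ (i, Fin.last n) :: l₂)
      = wordOf l₁ ++ ((i : ℕ) + 1) :: ((n : ℕ) + 1) :: wordOf l₂ := by
    simp [wordOf, List.flatMap_append, List.flatMap_cons, Fin.val_last]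
  have hword2 : wordOf (l₁ ++ l₂) = wordOf l₁ ++ wordOf l₂ := by
    simp [wordOf, List.flatMap_append]
  have hB : ∀ z ∈ wordOf l₂, (i : ℕ) + 1 < z ∧ z < n + 1 := by
    intro z hz
    rw [wordOf, List.mem_flatMap] at hz
    obtain ⟨p, hp, hzp⟩ := hz
    have hi1 : (i : ℕ) < (p.1 : ℕ) := h2 p hp
    have h12 : (p.1 : ℕ) < (p.2 : ℕ) := (hcan2 p hp).1
    have hn := h3 p hp
    simp only [List.mem_cons, List.mem_singleton, List.not_mem_nil, or_false] at hzp
    rcases hzp with rfl | rfl <;> omega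
  have hA : ∀ z ∈ wordOf l₁, ¬ (n + 1 < z) := by
    intro z hz
    rw [wordOf, List.mem_flatMap] at hz
    obtain ⟨p, hp, hzp⟩ := hz
    have := p.1.is_le; have := p.2.is_le
    simp only [List.mem_cons, List.mem_singleton, List.not_mem_nil, or_false] at hzp
    rcases hzp with rfl | rfl <;> omega
  rw [hword, hword2, inversions_eq_inv2, inversions_eq_inv2, inv2_append, inv2_append]
  have e2 : (((n : ℕ) + 1) :: wordOf l₂).countP (fun z => decide (z < (i : ℕ) + 1)) = 0 := by
    rw [List.countP_eq_zero]
    intro z hz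
    simp only [decide_eq_true_eq]
    rcases List.mem_cons.mp hz with rfl | hz
    · have := i.is_le; omega
    · have := (hB z hz).1; omega
  have e3 : (wordOf l₂).countP (fun z => decide (z < (n : ℕ) + 1)) = (wordOf l₂).length := by
    rw [List.countP_eq_length]
    intro z hz
    simp only [decide_eq_true_eq]
    exact (hB z hz).2
  have e4 : (wordOf l₂).length = 2 * l₂.length := wordOf_length l₂
  have e5 : (wordOf l₁).map
        (fun a => (((i : ℕ) + 1) :: ((n : ℕ) + 1) :: wordOf l₂).countP (fun z => decide (z < a)))
      = (wordOf l₁).map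
        (fun a => (if (i : ℕ) + 1 < a then 1 else 0)
          + (wordOf l₂).countP (fun z => decide (z < a))) := by
    apply List.map_congr_left
    intro a ha
    rw [List.countP_cons, List.countP_cons]
    have hya : ¬ ((n : ℕ) + 1 < a) := hA a ha
    simp only [decide_eq_true_eq]
    rw [if_neg hya]
    omega
  have e7a : ((l₁ ++ l₂).filter fun p => decide (p.1 < i ∧ i < p.2))
      = l₁.filter fun p => decide (p.1 < i ∧ i < p.2) := by
    have hnil : (l₂.filter fun p => decide (p.1 < i ∧ i < p.2)) = [] :=
      List.filter_eq_nil_iff.mpr (fun p hp => by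
        simp only [decide_eq_true_eq, not_and]
        intro h
        exact absurd h (not_lt.mpr (le_of_lt (h2 p hp))))
    rw [List.filter_append, hnil, List.append_nil]
  have e7b : ((l₁ ++ l₂).filter fun p => decide (i < p.1)) = l₂ := by
    rw [List.filter_append, List.filter_eq_nil_iff.mpr (fun p hp => by
      simp only [decide_eq_true_eq]
      exact not_lt.mpr (le_of_lt (h1 p hp))),
      List.filter_eq_self.mpr (fun p hp => by simp only [decide_eq_true_eq]; exact h2 p hp),
      List.nil_append]
  rw [e7a, e7b, e5, sum_map_add, count_lemma i l₁ h1]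
  simp only [inv2, List.countP_cons, e2, e3, e4]
  omega
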